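/- Let μ ∈ (0,1), let c_J := −1 − 2√(μ(1−μ)), and set x₀ := √(1/2 − (1/2)·√(μ/(−c_J))). Then V_{c_J}(x₀, 0) = 0, i.e. −c_J·x₀² − μ·x₀²/√(4x₀⁴ − 4x₀² + 1) − (1−μ)/2 = 0. -/

import Mathlib

/-- The critical points `(±x₀, 0)` of the Levi-Civita potential at the critical Jacobi
energy lie on the zero level set `V_{c_J} = 0`. -/
theorem stmt_10 (μ : ℝ) (hμ : μ ∈ Set.Ioo (0 : ℝ) 1) :
    -(-1 - 2 * Real.sqrt (μ * (1 - μ))) *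
        (Real.sqrt (1 / 2 - (1 / 2) *
          Real.sqrt (μ / (-(-1 - 2 * Real.sqrt (μ * (1 - μ))))))) ^ 2
      - μ * (Real.sqrt (1 / 2 - (1 / 2) *
          Real.sqrt (μ / (-(-1 - 2 * Real.sqrt (μ * (1 - μ))))))) ^ 2 /
        Real.sqrt (4 * (Real.sqrt (1 / 2 - (1 / 2) *
            Real.sqrt (μ / (-(-1 - 2 * Real.sqrt (μ * (1 - μ))))))) ^ 4
          - 4 * (Real.sqrt (1 / 2 - (1 / 2) *
            Real.sqrt (μ / (-(-1 - 2 * Real.sqrt (μ * (1 - μ))))))) ^ 2 + 1)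
      - (1 - μ) / 2 = 0 := by
  obtain ⟨hμ0, hμ1⟩ := hμ
  set s := Real.sqrt (μ * (1 - μ)) with hs
  have hs0 : 0 ≤ s := Real.sqrt_nonneg _
  have hs2 : s ^ 2 = μ * (1 - μ) := Real.sq_sqrt (by nlinarith)
  have hc0 : (0:ℝ) < -(-1 - 2 * s) := by linarith
  set c : ℝ := -(-1 - 2 * s) with hcdef
  set t := Real.sqrt (μ / c) with ht
  have ht2 : t ^ 2 = μ / c := Real.sq_sqrt (by positivity)
  have ht0 : 0 < t := Real.sqrt_pos.mpr (by positivity)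
  have htle : t ≤ 1 := by
    rw [ht, show (1:ℝ) = Real.sqrt 1 by simp]
    apply Real.sqrt_le_sqrt
    rw [div_le_one hc0]; linarith
  have hx2 : (Real.sqrt (1 / 2 - (1 / 2) * t)) ^ 2 = 1 / 2 - (1 / 2) * t :=
    Real.sq_sqrt (by linarith)
  set X := Real.sqrt (1 / 2 - (1 / 2) * t) with hX
  rw [show X ^ 4 = (X ^ 2) ^ 2 by ring, hx2]
  rw [show 4 * (1 / 2 - 1 / 2 * t) ^ 2 - 4 * (1 / 2 - 1 / 2 * t) + 1 = t ^ 2 by ring,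
    Real.sqrt_sq ht0.le]
  have hμeq : c * t ^ 2 = μ := by rw [ht2]; field_simp
  have hct : c * t = μ + s := by
    have h1 : (c * t) ^ 2 = (μ + s) ^ 2 := by
      rw [mul_pow, ht2]; field_simp
      linear_combination μ * hcdef - hs2
    nlinarith [mul_pos hc0 ht0, hμ0, hs0]
  field_simp
  nlinarith [hμeq, hct, hs2, ht0, mul_pos ht0 ht0]
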